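/- Let R > 0 and let f(r) = √(R⁴ − r⁴) for 0 < r < R (the profile of the Korányi sphere of radius R, defined by (x²+y²)² + t² = R⁴). Then for all r ∈ (0,R): the horizontal mean curvature is H(r) = 3r/R², the horizontal Gauss curvature is K(r) = (6r⁴ − 2R⁴)/(r²R⁴), and the symplectic distortion is Q(r) = (3r⁴ − R⁴)/(r R² √(R⁴ − r⁴)). -/

import Mathlib

/-- Horizontal mean curvature, horizontal Gauss curvature and symplectic
distortion of the Korányi sphere of radius `R` in the Heisenberg group,
whose profile is `f(r) = √(R⁴ − r⁴)`. -/
theorem koranyi_sphere_curvatures (R : ℝ) (hR : 0 < R) (f : ℝ → ℝ)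
    (hf : ∀ s, f s = Real.sqrt (R ^ 4 - s ^ 4)) :
    ∀ r ∈ Set.Ioo (0 : ℝ) R,
      -(4 * r ^ 3 * deriv (deriv f) r + (deriv f r) ^ 3) /
          (r * (4 * r ^ 2 + (deriv f r) ^ 2) ^ ((3 : ℝ) / 2)) = 3 * r / R ^ 2 ∧
      (4 * r * (8 * r + 2 * deriv f r * deriv (deriv f) r) -
          16 * (4 * r ^ 2 + (deriv f r) ^ 2)) /
        (4 * r ^ 2 + (deriv f r) ^ 2) ^ 2 = (6 * r ^ 4 - 2 * R ^ 4) / (r ^ 2 * R ^ 4) ∧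
      (r * (8 * r + 2 * deriv f r * deriv (deriv f) r) -
          4 * (4 * r ^ 2 + (deriv f r) ^ 2)) /
        (4 * r ^ 2 + (deriv f r) ^ 2) ^ ((3 : ℝ) / 2) =
        (3 * r ^ 4 - R ^ 4) / (r * R ^ 2 * Real.sqrt (R ^ 4 - r ^ 4)) := by
  -- first derivative at any point with R^4 - s^4 > 0
  have key : ∀ s : ℝ, 0 < R ^ 4 - s ^ 4 →
      HasDerivAt f (-2 * s ^ 3 / Real.sqrt (R ^ 4 - s ^ 4)) s := by
    intro s hs
    have hfe : f = fun x => Real.sqrt (R ^ 4 - x ^ 4) := funext hf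
    have h1 : HasDerivAt (fun x : ℝ => R ^ 4 - x ^ 4) (-(4 * s ^ 3)) s := by
      simpa using ((hasDerivAt_pow 4 s).const_sub (R ^ 4))
    have h2 := h1.sqrt (ne_of_gt hs)
    rw [hfe]
    convert h2 using 1
    have h3 : Real.sqrt (R ^ 4 - s ^ 4) ≠ 0 := by positivity
    field_simp
    ring
  intro r hr
  obtain ⟨hr0, hrR⟩ := hr
  have hw : 0 < R ^ 4 - r ^ 4 := by
    have h4 : r ^ 4 < R ^ 4 := pow_lt_pow_left₀ hrR hr0.le (by norm_num)
    linarith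
  set sw := Real.sqrt (R ^ 4 - r ^ 4) with hswdef
  have hsw0 : 0 < sw := Real.sqrt_pos.mpr hw
  have hsw2 : sw ^ 2 = R ^ 4 - r ^ 4 := Real.sq_sqrt hw.le
  have hswne : sw ≠ 0 := ne_of_gt hsw0
  -- deriv f r
  have hd1 : deriv f r = -2 * r ^ 3 / sw := (key r hw).deriv
  -- deriv f agrees with g on a neighborhood
  have hopen : IsOpen {s : ℝ | 0 < R ^ 4 - s ^ 4} :=
    isOpen_lt continuous_const (by continuity)
  have hev : deriv f =ᶠ[nhds r] (fun s => -2 * s ^ 3 / Real.sqrt (R ^ 4 - s ^ 4)) := by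
    filter_upwards [hopen.mem_nhds hw] with s hs
    exact (key s hs).deriv
  -- second derivative
  have hg : HasDerivAt (fun s => -2 * s ^ 3 / Real.sqrt (R ^ 4 - s ^ 4))
      (((-6 * r ^ 2) * sw - (-2 * r ^ 3) * (-2 * r ^ 3 / sw)) / sw ^ 2) r := by
    have hu : HasDerivAt (fun s : ℝ => -2 * s ^ 3) (-6 * r ^ 2) r := by
      have h := (hasDerivAt_pow 3 r).const_mul (-2 : ℝ)
      refine h.congr_deriv ?_
      norm_num
      ring
    have h1 : HasDerivAt (fun x : ℝ => R ^ 4 - x ^ 4) (-(4 * r ^ 3)) r := by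
      simpa using ((hasDerivAt_pow 4 r).const_sub (R ^ 4))
    have hv : HasDerivAt (fun s => Real.sqrt (R ^ 4 - s ^ 4)) (-2 * r ^ 3 / sw) r := by
      have h2 := h1.sqrt (ne_of_gt hw)
      convert h2 using 1
      field_simp
      ring
    exact hu.div hv hswne
  have hd2 : deriv (deriv f) r
      = ((-6 * r ^ 2) * sw - (-2 * r ^ 3) * (-2 * r ^ 3 / sw)) / sw ^ 2 := by
    rw [Filter.EventuallyEq.deriv_eq hev]
    exact hg.deriv
  -- base quantity
  have hbase : 4 * r ^ 2 + (deriv f r) ^ 2 = (2 * r * R ^ 2 / sw) ^ 2 := by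
    rw [hd1]
    field_simp
    linear_combination 4 * hsw2
  have hqpos : (0:ℝ) ≤ 2 * r * R ^ 2 / sw := by positivity
  have hsq : ∀ y : ℝ, 0 ≤ y → (y ^ 2) ^ ((3:ℝ)/2) = y ^ 3 := by
    intro y hy
    rw [← Real.rpow_natCast y 2, ← Real.rpow_mul hy]
    norm_num
  have hA : (4 * r ^ 2 + (deriv f r) ^ 2) ^ ((3:ℝ)/2) = (2 * r * R ^ 2 / sw) ^ 3 := by
    rw [hbase, hsq _ hqpos]
  have hrne : r ≠ 0 := ne_of_gt hr0
  have hRne : R ≠ 0 := ne_of_gt hR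
  refine ⟨?_, ?_, ?_⟩
  · rw [hA, hd1, hd2]
    field_simp
    linear_combination 24 * hsw2
  · rw [hbase, hd1, hd2]
    field_simp
    linear_combination (32 * (sw ^ 2 + 2 * r ^ 4 - R ^ 4)) * hsw2
  · rw [hA, hd1, hd2]
    field_simp
    linear_combination (8 * (-sw ^ 2 + 2 * r ^ 4 - R ^ 4)) * hsw2
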